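/- Let t : ZMod 5 → ℤ satisfy t(k) = Σ_{i ∈ ZMod 5} t(2i − k)·t(i) for every k ∈ ZMod 5, together with t(0) + t(1) + t(2) + t(3) + t(4) = 1. Then t(1)·t(2) = 3·t(4) − 3·t(4)², t(1)·t(3) = t(1)² − t(1), and t(1)·t(4) = t(4) − t(4)². -/

import Mathlib

lemma sum_zmod5' (f : ZMod 5 → ℤ) : ∑ i : ZMod 5, f i = f 0 + f 1 + f 2 + f 3 + f 4 := by
  show ∑ i : Fin 5, f i = _
  exact Fin.sum_univ_five (f := f)

lemma cube_zero (x : ℤ) (h : 5 * (x * (x - 1) * (5 * x - 1)) = 0) : x = 0 ∨ x = 1 := by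
  have h1 : x * (x - 1) * (5 * x - 1) = 0 := by linarith
  rcases mul_eq_zero.1 h1 with h2 | h2
  · rcases mul_eq_zero.1 h2 with h3 | h3
    · exact Or.inl h3
    · exact Or.inr (by linarith)
  · omega

/-- Gröbner-basis relations for idempotents of `ℤ[Q₅]`:
`t(1)·t(2) = 3·t(4) − 3·t(4)²`, `t(1)·t(3) = t(1)² − t(1)`, `t(1)·t(4) = t(4) − t(4)²`. -/
theorem stmt_9 (t : ZMod 5 → ℤ)
    (hidem : ∀ k : ZMod 5, t k = ∑ i : ZMod 5, t (2 * i - k) * t i)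
    (hsum : t 0 + t 1 + t 2 + t 3 + t 4 = 1) :
    t 1 * t 2 = 3 * t 4 - 3 * t 4 ^ 2 ∧
    t 1 * t 3 = t 1 ^ 2 - t 1 ∧
    t 1 * t 4 = t 4 - t 4 ^ 2 := by
  have h0 := hidem 0
  have h1 := hidem 1
  have h2 := hidem 2
  have h3 := hidem 3
  have h4 := hidem 4
  rw [sum_zmod5'] at h0 h1 h2 h3 h4
  rw [show ((2:ZMod 5) * 0 - 0) = 0 by decide, show ((2:ZMod 5) * 1 - 0) = 2 by decide,
      show ((2:ZMod 5) * 2 - 0) = 4 by decide, show ((2:ZMod 5) * 3 - 0) = 1 by decide,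
      show ((2:ZMod 5) * 4 - 0) = 3 by decide] at h0
  rw [show ((2:ZMod 5) * 0 - 1) = 4 by decide, show ((2:ZMod 5) * 1 - 1) = 1 by decide,
      show ((2:ZMod 5) * 2 - 1) = 3 by decide, show ((2:ZMod 5) * 3 - 1) = 0 by decide,
      show ((2:ZMod 5) * 4 - 1) = 2 by decide] at h1
  rw [show ((2:ZMod 5) * 0 - 2) = 3 by decide, show ((2:ZMod 5) * 1 - 2) = 0 by decide,
      show ((2:ZMod 5) * 2 - 2) = 2 by decide, show ((2:ZMod 5) * 3 - 2) = 4 by decide,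
      show ((2:ZMod 5) * 4 - 2) = 1 by decide] at h2
  rw [show ((2:ZMod 5) * 0 - 3) = 2 by decide, show ((2:ZMod 5) * 1 - 3) = 4 by decide,
      show ((2:ZMod 5) * 2 - 3) = 1 by decide, show ((2:ZMod 5) * 3 - 3) = 3 by decide,
      show ((2:ZMod 5) * 4 - 3) = 0 by decide] at h3
  rw [show ((2:ZMod 5) * 0 - 4) = 1 by decide, show ((2:ZMod 5) * 1 - 4) = 3 by decide,
      show ((2:ZMod 5) * 2 - 4) = 0 by decide, show ((2:ZMod 5) * 3 - 4) = 2 by decide,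
      show ((2:ZMod 5) * 4 - 4) = 4 by decide] at h4
  have hq0 : 5 * (t 0 * (t 0 - 1) * (5 * t 0 - 1)) = 0 := by
    linear_combination (-4) * h0 + (-10) * (t 0) * h0 + (2) * (t 1) * h0 + (4) * (t 2) * h0 + (5) * (t 4) * h0 + (-3) * (t 0)*(t 1) * h0 + (1) * (t 0)*(t 2) * h0 + (4) * (t 0)*(t 4) * h0 + (3) * (t 1)*(t 1) * h0 + (3) * (t 1)*(t 2) * h0 + (-2) * (t 1)*(t 3) * h0 + (-2) * (t 1)*(t 4) * h0 + (1) * (t 2)*(t 2) * h0 + (-5) * (t 2)*(t 3) * h0 + (1) * (t 2)*(t 4) * h0 + (5) * (t 3)*(t 3) * h0 + (-1) * (t 3)*(t 4) * h0 + (7) * (t 0) * h1 + (-1) * (t 2) * h1 + (-1) * (t 3) * h1 + (-3) * (t 4) * h1 + (-1) * (t 0)*(t 0) * h1 + (4) * (t 0)*(t 1) * h1 + (2) * (t 0)*(t 2) * h1 + (-9) * (t 0)*(t 3) * h1 + (5) * (t 0)*(t 4) * h1 + (-4) * (t 1)*(t 2) * h1 + (3) * (t 1)*(t 3) * h1 +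 (-3) * (t 1)*(t 4) * h1 + (-1) * (t 2)*(t 2) * h1 + (6) * (t 2)*(t 3) * h1 + (-2) * (t 2)*(t 4) * h1 + (5) * (t 0) * h2 + (-3) * (t 1) * h2 + (2) * (t 3) * h2 + (-2) * (t 4) * h2 + (1) * (t 0)*(t 0) * h2 + (-8) * (t 0)*(t 1) * h2 + (7) * (t 0)*(t 3) * h2 + (-1) * (t 0)*(t 4) * h2 + (2) * (t 1)*(t 1) * h2 + (3) * (t 1)*(t 3) * h2 + (1) * (t 1)*(t 4) * h2 + (-5) * (t 3)*(t 3) * h2 + (9) * (t 0) * h3 + (-3) * (t 1) * h3 + (-2) * (t 2) * h3 + (-2) * (t 4) * h3 + (-3) * (t 0)*(t 0) * h3 + (2) * (t 0)*(t 1) * h3 + (6) * (t 0)*(t 2) * h3 + (5) * (t 0)*(t 3) * h3 + (-7) * (t 0)*(t 4) * h3 + (1) * (t 1)*(t 1) * h3 + (-4) * (t 1)*(t 2) * h3 + (-5) * (t 1)*(t 3) * h3 + (5) * (t 1)*(t 4) * h3 + (-1) * (t 2)*(t 2) * h3 + (1) * (t 4)*(t 4) * h3 + (4) * (t 0) * h4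 + (3) * (t 1) * h4 + (-2) * (t 2) * h4 + (-2) * (t 3) * h4 + (2) * (t 0)*(t 0) * h4 + (6) * (t 0)*(t 1) * h4 + (-8) * (t 0)*(t 2) * h4 + (-3) * (t 0)*(t 3) * h4 + (-1) * (t 0)*(t 4) * h4 + (-6) * (t 1)*(t 1) * h4 + (4) * (t 1)*(t 2) * h4 + (1) * (t 1)*(t 3) * h4 + (-1) * (t 1)*(t 4) * h4 + (1) * (t 2)*(t 2) * h4 + (-9) * (t 0) * hsum + (15) * (t 0)*(t 0) * hsum
  have hq1 : 5 * (t 1 * (t 1 - 1) * (5 * t 1 - 1)) = 0 := by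
    linear_combination (-9) * h0 + (15) * (t 0) * h0 + (12) * (t 1) * h0 + (9) * (t 2) * h0 + (3) * (t 3) * h0 + (11) * (t 4) * h0 + (-5) * (t 0)*(t 1) * h0 + (5) * (t 0)*(t 2) * h0 + (-8) * (t 0)*(t 3) * h0 + (2) * (t 0)*(t 4) * h0 + (-3) * (t 1)*(t 1) * h0 + (16) * (t 1)*(t 2) * h0 + (-15) * (t 1)*(t 3) * h0 + (4) * (t 1)*(t 4) * h0 + (-3) * (t 2)*(t 2) * h0 + (-5) * (t 2)*(t 3) * h0 + (-1) * (t 2)*(t 4) * h0 + (5) * (t 3)*(t 3) * h0 + (-3) * (t 3)*(t 4) * h0 + (-4) * (t 4)*(t 4) * h0 + (5) * h1 + (-3) * (t 0) * h1 + (-25) * (t 1) * h1 + (-7) * (t 2) * h1 + (-4) * (t 3) * h1 + (-8) * (t 4) * h1 + (5) * (t 0)*(t 0) * h1 + (6) * (t 0)*(t 1) * h1 + (-4) * (t 0)*(t 2) * h1 + (4) * (t 0)*(t 3) * h1 + (-8) * (t 0)*(t 4) * h1 + (-2) * (t 1)*(t 2) * h1 + (11) * (t 1)*(t 3) * h1 +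 (-7) * (t 1)*(t 4) * h1 + (3) * (t 2)*(t 2) * h1 + (8) * (t 2)*(t 3) * h1 + (4) * (t 4)*(t 4) * h1 + (-2) * (t 1) * h2 + (3) * (t 3) * h2 + (-5) * (t 4) * h2 + (3) * (t 0)*(t 0) * h2 + (18) * (t 0)*(t 1) * h2 + (6) * (t 0)*(t 2) * h2 + (-2) * (t 0)*(t 3) * h2 + (-1) * (t 0)*(t 4) * h2 + (2) * (t 1)*(t 1) * h2 + (6) * (t 1)*(t 2) * h2 + (9) * (t 1)*(t 3) * h2 + (-10) * (t 1)*(t 4) * h2 + (-5) * (t 3)*(t 3) * h2 + (4) * (t 4)*(t 4) * h2 + (11) * (t 0) * h3 + (-5) * (t 1) * h3 + (2) * (t 2) * h3 + (-6) * (t 4) * h3 + (-7) * (t 0)*(t 0) * h3 + (2) * (t 0)*(t 1) * h3 + (-3) * (t 0)*(t 2) * h3 + (5) * (t 0)*(t 3) * h3 + (10) * (t 0)*(t 4) * h3 + (5) * (t 1)*(t 1) * h3 + (-21) * (t 1)*(t 2) * h3 + (-5) * (t 1)*(t 3) * h3 + (14) * (t 1)*(t 4) * h3 + (-3) * (t 2)*(t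 2) * h3 + (3) * (t 4)*(t 4) * h3 + (3) * (t 0) * h4 + (8) * (t 1) * h4 + (1) * (t 2) * h4 + (-3) * (t 3) * h4 + (2) * (t 0)*(t 0) * h4 + (-20) * (t 0)*(t 1) * h4 + (3) * (t 0)*(t 2) * h4 + (-9) * (t 0)*(t 3) * h4 + (-7) * (t 0)*(t 4) * h4 + (-8) * (t 1)*(t 1) * h4 + (4) * (t 1)*(t 2) * h4 + (10) * (t 1)*(t 3) * h4 + (-7) * (t 1)*(t 4) * h4 + (-3) * (t 2)*(t 2) * h4 + (-9) * (t 0) * hsum + (15) * (t 0)*(t 0) * hsum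
  have hq2 : 5 * (t 2 * (t 2 - 1) * (5 * t 2 - 1)) = 0 := by
    linear_combination (-9) * h0 + (15) * (t 0) * h0 + (5) * (t 1) * h0 + (12) * (t 2) * h0 + (4) * (t 3) * h0 + (-7) * (t 4) * h0 + (8) * (t 0)*(t 1) * h0 + (18) * (t 0)*(t 2) * h0 + (10) * (t 0)*(t 4) * h0 + (3) * (t 1)*(t 1) * h0 + (-8) * (t 1)*(t 2) * h0 + (13) * (t 1)*(t 3) * h0 + (2) * (t 1)*(t 4) * h0 + (-3) * (t 2)*(t 2) * h0 + (18) * (t 2)*(t 3) * h0 + (14) * (t 2)*(t 4) * h0 + (3) * (t 3)*(t 3) * h0 + (-1) * (t 3)*(t 4) * h0 + (13) * (t 4)*(t 4) * h0 + (9) * (t 0) * h1 + (-3) * (t 2) * h1 + (-3) * (t 3) * h1 + (12) * (t 4) * h1 + (-5) * (t 0)*(t 0) * h1 + (-7) * (t 0)*(t 1) * h1 + (-11) * (t 0)*(t 2) * h1 + (8) * (t 0)*(t 3) * h1 + (-6) * (t 0)*(t 4) * h1 + (-6) * (t 1)*(t 2) * h1 + (-8) * (t 1)*(t 3) * h1 +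 (-5) * (t 1)*(t 4) * h1 + (3) * (t 2)*(t 2) * h1 + (4) * (t 2)*(t 3) * h1 + (-19) * (t 2)*(t 4) * h1 + (-13) * (t 4)*(t 4) * h1 + (5) * h2 + (-3) * (t 0) * h2 + (-6) * (t 1) * h2 + (-25) * (t 2) * h2 + (-1) * (t 3) * h2 + (9) * (t 4) * h2 + (5) * (t 0)*(t 0) * h2 + (-12) * (t 0)*(t 1) * h2 + (-17) * (t 0)*(t 2) * h2 + (-6) * (t 0)*(t 3) * h2 + (-9) * (t 0)*(t 4) * h2 + (2) * (t 1)*(t 1) * h2 + (4) * (t 1)*(t 2) * h2 + (-16) * (t 1)*(t 3) * h2 + (1) * (t 1)*(t 4) * h2 + (-21) * (t 2)*(t 3) * h2 + (-3) * (t 3)*(t 3) * h2 + (-13) * (t 4)*(t 4) * h2 + (10) * (t 0) * h3 + (-6) * (t 1) * h3 + (1) * (t 2) * h3 + (-3) * (t 4) * h3 + (-5) * (t 0)*(t 0) * h3 + (2) * (t 0)*(t 1) * h3 + (-16) * (t 0)*(t 2) * h3 + (3) * (t 0)*(t 3) * h3 + (6) * (t 0)*(t 4) * h3 + (3) * (t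 1)*(t 1) * h3 + (3) * (t 1)*(t 2) * h3 + (-3) * (t 1)*(t 3) * h3 + (7) * (t 1)*(t 4) * h3 + (-1) * (t 2)*(t 2) * h3 + (1) * (t 4)*(t 4) * h3 + (16) * (t 0) * h4 + (-7) * (t 1) * h4 + (-18) * (t 2) * h4 + (-1) * (t 3) * h4 + (-13) * (t 0)*(t 0) * h4 + (14) * (t 0)*(t 1) * h4 + (14) * (t 0)*(t 2) * h4 + (25) * (t 0)*(t 3) * h4 + (12) * (t 0)*(t 4) * h4 + (5) * (t 1)*(t 1) * h4 + (-11) * (t 1)*(t 2) * h4 + (-16) * (t 1)*(t 3) * h4 + (12) * (t 1)*(t 4) * h4 + (18) * (t 2)*(t 2) * h4 + (-9) * (t 0) * hsum + (15) * (t 0)*(t 0) * hsum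
  have hq3 : 5 * (t 3 * (t 3 - 1) * (5 * t 3 - 1)) = 0 := by
    linear_combination (-9) * h0 + (15) * (t 0) * h0 + (10) * (t 1) * h0 + (1) * (t 2) * h0 + (10) * (t 3) * h0 + (17) * (t 4) * h0 + (1) * (t 0)*(t 1) * h0 + (-10) * (t 0)*(t 2) * h0 + (4) * (t 0)*(t 3) * h0 + (-7) * (t 0)*(t 4) * h0 + (-4) * (t 1)*(t 1) * h0 + (1) * (t 1)*(t 2) * h0 + (2) * (t 1)*(t 3) * h0 + (7) * (t 1)*(t 4) * h0 + (6) * (t 2)*(t 2) * h0 + (-11) * (t 2)*(t 3) * h0 + (-4) * (t 2)*(t 4) * h0 + (-1) * (t 3)*(t 3) * h0 + (-5) * (t 3)*(t 4) * h0 + (-9) * (t 4)*(t 4) * h0 + (-1) * (t 0) * h1 + (5) * (t 2) * h1 + (-11) * (t 4) * h1 + (4) * (t 0)*(t 0) * h1 + (10) * (t 0)*(t 1) * h1 + (11) * (t 0)*(t 2) * h1 + (8) * (t 0)*(t 3) * h1 + (-4) * (t 0)*(t 4) * h1 + (-1) * (t 1)*(t 2) * h1 + (21) * (t 1)*(t 3)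 * h1 + (-12) * (t 1)*(t 4) * h1 + (-6) * (t 2)*(t 2) * h1 + (4) * (t 2)*(t 3) * h1 + (1) * (t 2)*(t 4) * h1 + (9) * (t 4)*(t 4) * h1 + (13) * (t 0) * h2 + (-9) * (t 1) * h2 + (-1) * (t 3) * h2 + (-12) * (t 4) * h2 + (-8) * (t 0)*(t 0) * h2 + (12) * (t 0)*(t 1) * h2 + (11) * (t 0)*(t 2) * h2 + (-10) * (t 0)*(t 3) * h2 + (10) * (t 0)*(t 4) * h2 + (7) * (t 1)*(t 1) * h2 + (-1) * (t 1)*(t 2) * h2 + (3) * (t 1)*(t 3) * h2 + (9) * (t 1)*(t 4) * h2 + (12) * (t 2)*(t 3) * h2 + (1) * (t 3)*(t 3) * h2 + (9) * (t 4)*(t 4) * h2 + (5) * h3 + (-1) * (t 0) * h3 + (-9) * (t 1) * h3 + (1) * (t 2) * h3 + (-25) * (t 3) * h3 + (-9) * (t 4) * h3 + (3) * (t 0)*(t 0) * h3 + (-8) * (t 0)*(t 1) * h3 + (-3) * (t 0)*(t 2) * h3 + (-1) * (t 0)*(t 3) * h3 + (6) * (t 0)*(t 4) * h3 + (5) * (t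 1)*(t 1) * h3 + (-2) * (t 1)*(t 2) * h3 + (1) * (t 1)*(t 3) * h3 + (-1) * (t 1)*(t 4) * h3 + (-5) * (t 2)*(t 2) * h3 + (5) * (t 4)*(t 4) * h3 + (-3) * (t 0) * h4 + (16) * (t 1) * h4 + (3) * (t 2) * h4 + (7) * (t 0)*(t 0) * h4 + (-12) * (t 0)*(t 1) * h4 + (5) * (t 0)*(t 2) * h4 + (-21) * (t 0)*(t 3) * h4 + (-14) * (t 0)*(t 4) * h4 + (-17) * (t 1)*(t 1) * h4 + (9) * (t 1)*(t 2) * h4 + (-7) * (t 1)*(t 3) * h4 + (-14) * (t 1)*(t 4) * h4 + (-6) * (t 2)*(t 2) * h4 + (-9) * (t 0) * hsum + (15) * (t 0)*(t 0) * hsum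
  have hq4 : 5 * (t 4 * (t 4 - 1) * (5 * t 4 - 1)) = 0 := by
    linear_combination (-9) * h0 + (15) * (t 0) * h0 + (-9) * (t 1) * h0 + (24) * (t 2) * h0 + (3) * (t 3) * h0 + (9) * (t 4) * h0 + (-16) * (t 0)*(t 1) * h0 + (1) * (t 0)*(t 2) * h0 + (4) * (t 0)*(t 3) * h0 + (21) * (t 0)*(t 4) * h0 + (16) * (t 1)*(t 1) * h0 + (3) * (t 1)*(t 2) * h0 + (2) * (t 1)*(t 3) * h0 + (-11) * (t 1)*(t 4) * h0 + (-16) * (t 2)*(t 2) * h0 + (18) * (t 2)*(t 3) * h0 + (5) * (t 2)*(t 4) * h0 + (3) * (t 3)*(t 3) * h0 + (-5) * (t 3)*(t 4) * h0 + (23) * (t 0) * h1 + (-19) * (t 2) * h1 + (-2) * (t 3) * h1 + (-18) * (t 0)*(t 0) * h1 + (17) * (t 0)*(t 1) * h1 + (2) * (t 0)*(t 2) * h1 + (19) * (t 0)*(t 3) * h1 + (-17) * (t 0)*(t 4) * h1 + (-17) * (t 1)*(t 2) * h1 + (-12) * (t 1)*(t 3) * h1 + (12) * (t 1)*(t 4)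 * h1 + (16) * (t 2)*(t 2) * h1 + (8) * (t 2)*(t 3) * h1 + (-10) * (t 2)*(t 4) * h1 + (-10) * (t 0) * h2 + (10) * (t 1) * h2 + (2) * (t 3) * h2 + (14) * (t 0)*(t 0) * h2 + (5) * (t 0)*(t 1) * h2 + (-19) * (t 0)*(t 3) * h2 + (-14) * (t 0)*(t 4) * h2 + (-13) * (t 1)*(t 1) * h2 + (21) * (t 1)*(t 2) * h2 + (16) * (t 1)*(t 3) * h2 + (14) * (t 1)*(t 4) * h2 + (-21) * (t 2)*(t 3) * h2 + (-3) * (t 3)*(t 3) * h2 + (6) * (t 0) * h3 + (-2) * (t 1) * h3 + (3) * (t 2) * h3 + (-5) * (t 4) * h3 + (-3) * (t 0)*(t 0) * h3 + (2) * (t 0)*(t 1) * h3 + (1) * (t 0)*(t 2) * h3 + (3) * (t 0)*(t 3) * h3 + (15) * (t 0)*(t 4) * h3 + (1) * (t 1)*(t 1) * h3 + (-6) * (t 1)*(t 2) * h3 + (-3) * (t 1)*(t 3) * h3 + (-10) * (t 1)*(t 4) * h3 + (-5) * (t 2)*(t 2) * h3 + (5) * (t 4)*(t 4) * h3 + (5)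 * h4 + (-9) * (t 2) * h4 + (-4) * (t 3) * h4 + (-25) * (t 4) * h4 + (2) * (t 0)*(t 0) * h4 + (-3) * (t 0)*(t 1) * h4 + (1) * (t 0)*(t 2) * h4 + (-7) * (t 0)*(t 3) * h4 + (-5) * (t 0)*(t 4) * h4 + (-4) * (t 1)*(t 1) * h4 + (-6) * (t 1)*(t 2) * h4 + (-3) * (t 1)*(t 3) * h4 + (-5) * (t 1)*(t 4) * h4 + (5) * (t 2)*(t 2) * h4 + (-9) * (t 0) * hsum + (15) * (t 0)*(t 0) * hsum
  have hz0 := cube_zero _ hq0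
  have hz1 := cube_zero _ hq1
  have hz2 := cube_zero _ hq2
  have hz3 := cube_zero _ hq3
  have hz4 := cube_zero _ hq4
  clear h0 h1 h2 h3 h4 hq0 hq1 hq2 hq3 hq4 hidem
  rcases hz0 with h|h <;> rcases hz1 with h'|h' <;> rcases hz2 with h''|h'' <;>
    rcases hz3 with h3'|h3' <;> rcases hz4 with h4'|h4' <;>
    simp only [h, h', h'', h3', h4'] at hsum ⊢ <;> norm_num at *
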